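/- For every α ≥ β > 0 there exist three affinely independent points A, B, C in ℝ² and a real constant k > 0 such that the set of points P = (x, y) with W(P) = k (the sum of squared distances from P to the three side lines of triangle ABC) is exactly the ellipse {(x, y) : x²/α² + y²/β² = 1}. -/

import Mathlib

noncomputable section

/-- The point `(x, y)` of the Euclidean plane `ℝ²`. -/
def pt (x y : ℝ) : EuclideanSpace ℝ (Fin 2) :=
  (WithLp.equiv 2 (Fin 2 → ℝ)).symm ![x, y]

/-- The line through `X` and `Y`, i.e. the affine span of `{X, Y}`, as a set. -/
def lineThrough (X Y : EuclideanSpace ℝ (Fin 2)) : Set (EuclideanSpace ℝ (Fin 2)) :=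
  (affineSpan ℝ {X, Y} : AffineSubspace ℝ (EuclideanSpace ℝ (Fin 2)))

/-- The distance sum function of the triangle `ABC`:
`V(P) = dist(P, line BC) + dist(P, line CA) + dist(P, line AB)`. -/
def vSum (A B C P : EuclideanSpace ℝ (Fin 2)) : ℝ :=
  Metric.infDist P (lineThrough B C) + Metric.infDist P (lineThrough C A) +
    Metric.infDist P (lineThrough A B)

/-- The squared-distance sum function of the triangle `ABC`:
`W(P) = dist(P, line BC)² + dist(P, line CA)² + dist(P, line AB)²`. -/
def wSum (A B C P : EuclideanSpace ℝ (Fin 2)) : ℝ :=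
  Metric.infDist P (lineThrough B C) ^ 2 + Metric.infDist P (lineThrough C A) ^ 2 +
    Metric.infDist P (lineThrough A B) ^ 2

/-- The Euclidean distance in `ℝ²` in coordinates. -/
lemma dist_eq' (P Q : EuclideanSpace ℝ (Fin 2)) :
    dist P Q = Real.sqrt ((P 0 - Q 0)^2 + (P 1 - Q 1)^2) := by
  rw [EuclideanSpace.dist_eq]
  simp [Fin.sum_univ_two, Real.dist_eq, sq_abs]

/-- Distance from a point to a line given by a normalized equation `a x + b y = c`. -/
lemma infDist_line (a b c : ℝ) (hab : a^2 + b^2 = 1)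
    (X Y P : EuclideanSpace ℝ (Fin 2)) (hXY : X ≠ Y)
    (hX : a * X 0 + b * X 1 = c) (hY : a * Y 0 + b * Y 1 = c) :
    Metric.infDist P (lineThrough X Y) = |a * P 0 + b * P 1 - c| := by
  set e := a * P 0 + b * P 1 - c with he
  have horth : a * (Y 0 - X 0) + b * (Y 1 - X 1) = 0 := by linarith
  have hm0 : a * (Y 1 - X 1) - b * (Y 0 - X 0) ≠ 0 := by
    intro h
    apply hXY
    have h0 : Y 0 - X 0 = 0 := by linear_combination (-(Y 0 - X 0)) * hab + a * horth - b * h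
    have h1 : Y 1 - X 1 = 0 := by linear_combination (-(Y 1 - X 1)) * hab + b * horth + a * h
    ext i; fin_cases i <;> simp <;> linarith
  set F : EuclideanSpace ℝ (Fin 2) := pt (P 0 - e * a) (P 1 - e * b) with hF
  have hF0 : F 0 = P 0 - e * a := by simp [hF, pt]
  have hF1 : F 1 = P 1 - e * b := by simp [hF, pt]
  have hFo : a * (F 0 - X 0) + b * (F 1 - X 1) = 0 := by
    rw [hF0, hF1]; linear_combination -he - hX - e * hab
  have hcross : (F 0 - X 0) * (Y 1 - X 1) - (F 1 - X 1) * (Y 0 - X 0) = 0 := by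
    linear_combination (a * (Y 1 - X 1) - b * (Y 0 - X 0)) * hFo
      + (b * (F 0 - X 0) - a * (F 1 - X 1)) * horth
      - ((F 0 - X 0) * (Y 1 - X 1) - (F 1 - X 1) * (Y 0 - X 0)) * hab
  have hFmem : F ∈ lineThrough X Y := by
    have hFX : F = (F - X) +ᵥ X := by simp
    rw [lineThrough, SetLike.mem_coe, hFX, vadd_left_mem_affineSpan_pair]
    refine ⟨(a * (F 1 - X 1) - b * (F 0 - X 0)) / (a * (Y 1 - X 1) - b * (Y 0 - X 0)), ?_⟩
    ext i
    fin_cases i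
    · show _ * ((Y -ᵥ X) 0) = (F - X) 0
      simp only [vsub_eq_sub, PiLp.sub_apply, smul_eq_mul]
      rw [div_mul_eq_mul_div, div_eq_iff hm0]
      linear_combination (-a) * hcross
    · show _ * ((Y -ᵥ X) 1) = (F - X) 1
      simp only [vsub_eq_sub, PiLp.sub_apply, smul_eq_mul]
      rw [div_mul_eq_mul_div, div_eq_iff hm0]
      linear_combination (-b) * hcross
  have hdistF : dist P F = |e| := by
    rw [dist_eq', hF0, hF1]
    have h2 : (P 0 - (P 0 - e * a))^2 + (P 1 - (P 1 - e * b))^2 = e^2 := by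
      linear_combination e^2 * hab
    rw [h2, Real.sqrt_sq_eq_abs]
  apply le_antisymm
  · calc Metric.infDist P (lineThrough X Y) ≤ dist P F := Metric.infDist_le_dist_of_mem hFmem
    _ = |e| := hdistF
  · by_contra h
    push_neg at h
    obtain ⟨Q, hQ, hQlt⟩ := (Metric.infDist_lt_iff ⟨F, hFmem⟩).mp h
    have hQ' : a * Q 0 + b * Q 1 = c := by
      have hQX : Q = (Q - X) +ᵥ X := by simp
      rw [lineThrough, SetLike.mem_coe, hQX, vadd_left_mem_affineSpan_pair] at hQ
      obtain ⟨r, hr⟩ := hQ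
      have h0 : Q 0 - X 0 = r * (Y 0 - X 0) := by
        have := congrArg (fun v => v 0) hr; simpa [vsub_eq_sub] using this.symm
      have h1 : Q 1 - X 1 = r * (Y 1 - X 1) := by
        have := congrArg (fun v => v 1) hr; simpa [vsub_eq_sub] using this.symm
      linear_combination a * h0 + b * h1 + hX + r * horth
    have hle : |e| ≤ dist P Q := by
      rw [dist_eq', show |e| = Real.sqrt (e^2) by rw [Real.sqrt_sq_eq_abs]]
      apply Real.sqrt_le_sqrt
      have hee : e = a * (P 0 - Q 0) + b * (P 1 - Q 1) := by rw [he]; linarith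
      rw [hee]
      have key : (a * (P 0 - Q 0) + b * (P 1 - Q 1))^2
          + (a * (P 1 - Q 1) - b * (P 0 - Q 0))^2 = (P 0 - Q 0)^2 + (P 1 - Q 1)^2 := by
        linear_combination ((P 0 - Q 0)^2 + (P 1 - Q 1)^2) * hab
      nlinarith [sq_nonneg (a * (P 1 - Q 1) - b * (P 0 - Q 0))]
    linarith

/-- Every canonical ellipse `x²/α² + y²/β² = 1` (with `α ≥ β > 0`) is the locus of points
with some constant sum `k` of squared distances from the side lines of a suitable
triangle. -/
theorem stmt_14 (α β : ℝ) (hβ : 0 < β) (hαβ : β ≤ α) :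
    ∃ A B C : EuclideanSpace ℝ (Fin 2), AffineIndependent ℝ ![A, B, C] ∧
      ∃ k : ℝ, 0 < k ∧ ∀ P : EuclideanSpace ℝ (Fin 2),
        wSum A B C P = k ↔ (P 0) ^ 2 / α ^ 2 + (P 1) ^ 2 / β ^ 2 = 1 := by
  have hα : 0 < α := lt_of_lt_of_le hβ hαβ
  have hd : 0 < α^2 + β^2 := by positivity
  set s : ℝ := 3 * β^2 / (α^2 + β^2) with hs
  have hs_pos : 0 < s := by positivity
  have hs_le : s ≤ 3/2 := by
    rw [hs, div_le_iff₀ hd]; nlinarith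
  set c : ℝ := Real.sqrt (s/2) with hcdef
  set q : ℝ := Real.sqrt (1 - s/2) with hqdef
  have hc_pos : 0 < c := Real.sqrt_pos.mpr (by linarith)
  have hq_pos : 0 < q := Real.sqrt_pos.mpr (by linarith)
  have hc2 : c^2 = s/2 := Real.sq_sqrt (by linarith)
  have hq2 : q^2 = 1 - s/2 := Real.sq_sqrt (by linarith)
  have hunit : c^2 + q^2 = 1 := by rw [hc2, hq2]; ring
  set L : ℝ := 3 * α^2 * β^2 / (α^2 + β^2) with hL
  have hL_pos : 0 < L := by positivity
  have hLa : L / α^2 = 2 * c^2 := by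
    rw [hc2, hs, hL]; field_simp
  have hLb : L / β^2 = 2 * q^2 + 1 := by
    rw [hq2, hs, hL]; field_simp; ring
  -- the three vertices
  set A : EuclideanSpace ℝ (Fin 2) := pt (-((1 + 2*q^2)/c)) (-(2*q)) with hA
  set B : EuclideanSpace ℝ (Fin 2) := pt ((1 + 2*q^2)/c) (-(2*q)) with hB
  set C : EuclideanSpace ℝ (Fin 2) := pt 0 (1/q) with hC
  have hA0 : A 0 = -((1 + 2*q^2)/c) := by simp [hA, pt]
  have hA1 : A 1 = -(2*q) := by simp [hA, pt]
  have hB0 : B 0 = (1 + 2*q^2)/c := by simp [hB, pt]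
  have hB1 : B 1 = -(2*q) := by simp [hB, pt]
  have hC0 : C 0 = 0 := by simp [hC, pt]
  have hC1 : C 1 = 1/q := by simp [hC, pt]
  have hpos : 0 < (1 + 2*q^2)/c := by positivity
  have hAB : A ≠ B := by
    intro h; have h0 : A 0 = B 0 := by rw [h]
    rw [hA0, hB0] at h0; linarith
  have hBC : B ≠ C := by
    intro h; have h0 : B 0 = C 0 := by rw [h]
    rw [hB0, hC0] at h0; linarith
  have hCA : C ≠ A := by
    intro h; have h0 : C 0 = A 0 := by rw [h]
    rw [hC0, hA0] at h0; linarith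
  -- distance formulas for the three side lines
  have hcne : c ≠ 0 := ne_of_gt hc_pos
  have hqne : q ≠ 0 := ne_of_gt hq_pos
  have dBC : ∀ P, Metric.infDist P (lineThrough B C) = |c * P 0 + q * P 1 - 1| := by
    intro P
    apply infDist_line c q 1 hunit B C P hBC
    · rw [hB0, hB1]; field_simp; ring
    · rw [hC0, hC1]; field_simp; ring
  have dCA : ∀ P, Metric.infDist P (lineThrough C A) = |c * P 0 + -q * P 1 - -1| := by
    intro P
    apply infDist_line c (-q) (-1) (by rw [neg_pow]; simpa using hunit) C A P hCA
    · rw [hC0, hC1]; field_simp; ring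
    · rw [hA0, hA1]; field_simp; ring
  have dAB : ∀ P, Metric.infDist P (lineThrough A B) = |0 * P 0 + 1 * P 1 - -(2*q)| := by
    intro P
    apply infDist_line 0 1 (-(2*q)) (by norm_num) A B P hAB
    · rw [hA1]; ring
    · rw [hB1]; ring
  refine ⟨A, B, C, ?_, L + (2 + 4*q^2), by positivity, ?_⟩
  -- affine independence
  · rw [affineIndependent_iff_not_collinear_set]
    intro hcol
    have hCmem : C ∈ lineThrough A B := by
      have := hcol.mem_affineSpan_of_mem_of_ne
        (Set.mem_insert _ _) (Set.mem_insert_of_mem _ (Set.mem_insert _ _))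
        (Set.mem_insert_of_mem _ (Set.mem_insert_of_mem _ (Set.mem_singleton _))) hAB
      exact this
    have h0 : Metric.infDist C (lineThrough A B) = 0 := Metric.infDist_zero_of_mem hCmem
    rw [dAB, hC0, hC1] at h0
    have : 0 < |0 * 0 + 1 * (1/q) - -(2*q)| := by
      apply abs_pos.mpr; intro h; field_simp at h; nlinarith
    linarith
  -- the locus identity
  · intro P
    have hkey : (c * P 0 + q * P 1 - 1)^2 + (c * P 0 + -q * P 1 - -1)^2
        + (0 * P 0 + 1 * P 1 - -(2*q))^2
        = L * ((P 0)^2/α^2 + (P 1)^2/β^2) + (2 + 4*q^2) := by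
      have hr : L * ((P 0)^2/α^2 + (P 1)^2/β^2)
          = L/α^2 * (P 0)^2 + L/β^2 * (P 1)^2 := by ring
      rw [hr, hLa, hLb]; ring
    rw [wSum, dBC, dCA, dAB, sq_abs, sq_abs, sq_abs, hkey]
    constructor
    · intro h
      have h2 : L * ((P 0)^2/α^2 + (P 1)^2/β^2) = L * 1 := by linarith
      exact mul_left_cancel₀ (ne_of_gt hL_pos) h2
    · intro h; rw [h]; ring
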